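/- arXiv:1801.03362 — 3 statements merged into one kernel-verified Lean document; each statement's English description precedes it below -/
import Mathlib

section
/- Let C : D(C) ⊆ H → Y be closed and densely defined, B : Y → X bounded, and suppose C*B* is densely defined. Then the block operator on H ⊕ X given by [[0, −C*B*],[cl(BC), 0]] with domain D(cl(BC)) ⊕ D(C*B*) is skew-selfadjoint. -/
/-- The composition `B ∘ C` of a bounded operator `B` with a partially defined
(unbounded) operator `C`, as a `LinearPMap` with domain `D(C)`. -/
noncomputable def clmCompPMap {𝕜 H Y X : Type*} [RCLike 𝕜]
    [NormedAddCommGroup H] [InnerProductSpace 𝕜 H]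
    [NormedAddCommGroup Y] [InnerProductSpace 𝕜 Y]
    [NormedAddCommGroup X] [InnerProductSpace 𝕜 X]
    (B : Y →L[𝕜] X) (C : H →ₗ.[𝕜] Y) : H →ₗ.[𝕜] X :=
  { domain := C.domain, toFun := (B : Y →ₗ[𝕜] X).comp C.toFun }

/-- The composition `C' ∘ B'` of a partially defined operator `C'` with a bounded
operator `B'`, as a `LinearPMap` with domain `{x | B' x ∈ D(C')}`. -/
noncomputable def pmapCompClm {𝕜 H Y X : Type*} [RCLike 𝕜]
    [NormedAddCommGroup H] [InnerProductSpace 𝕜 H]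
    [NormedAddCommGroup Y] [InnerProductSpace 𝕜 Y]
    [NormedAddCommGroup X] [InnerProductSpace 𝕜 X]
    (C' : Y →ₗ.[𝕜] H) (B' : X →L[𝕜] Y) : X →ₗ.[𝕜] H :=
  { domain := C'.domain.comap (B' : X →ₗ[𝕜] Y),
    toFun := C'.toFun.comp (((B' : X →ₗ[𝕜] Y)).restrict (fun _ hx => hx)) }

/-- The block operator `[[0, -C'], [C, 0]]` acting on the Hilbert space direct sum
`H₀ ⊕ H₁` (realized as `WithLp 2 (H₀ × H₁)`), with domain `D(C) ⊕ D(C')`,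
`(u, v) ↦ (-C' v, C u)`. -/
noncomputable def blkL2 {𝕜 H₀ H₁ : Type*} [RCLike 𝕜]
    [NormedAddCommGroup H₀] [InnerProductSpace 𝕜 H₀]
    [NormedAddCommGroup H₁] [InnerProductSpace 𝕜 H₁]
    (C : H₀ →ₗ.[𝕜] H₁) (C' : H₁ →ₗ.[𝕜] H₀) :
    WithLp 2 (H₀ × H₁) →ₗ.[𝕜] WithLp 2 (H₀ × H₁) :=
  { domain := (C.domain.prod C'.domain).comap (WithLp.linearEquiv 2 𝕜 (H₀ × H₁)).toLinearMap,
    toFun :=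
    { toFun := fun x => (WithLp.equiv 2 (H₀ × H₁)).symm
        (-(C' ⟨(WithLp.equiv 2 (H₀ × H₁) x.1).2, x.2.2⟩),
          C ⟨(WithLp.equiv 2 (H₀ × H₁) x.1).1, x.2.1⟩)
      map_add' := by
        intro x y
        have e1 : (⟨(WithLp.equiv 2 (H₀ × H₁) (x + y).1).2, (x + y).2.2⟩ : C'.domain)
            = ⟨(WithLp.equiv 2 (H₀ × H₁) x.1).2, x.2.2⟩
              + ⟨(WithLp.equiv 2 (H₀ × H₁) y.1).2, y.2.2⟩ := rfl
        have e2 : (⟨(WithLp.equiv 2 (H₀ × H₁) (x + y).1).1, (x + y).2.1⟩ : C.domain)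
            = ⟨(WithLp.equiv 2 (H₀ × H₁) x.1).1, x.2.1⟩
              + ⟨(WithLp.equiv 2 (H₀ × H₁) y.1).1, y.2.1⟩ := rfl
        beta_reduce
        rw [e1, e2, C'.map_add, C.map_add, WithLp.equiv_symm_apply, ← WithLp.toLp_add, Prod.mk_add_mk, neg_add]
      map_smul' := by
        intro c x
        have e1 : (⟨(WithLp.equiv 2 (H₀ × H₁) (c • x).1).2, (c • x).2.2⟩ : C'.domain)
            = c • ⟨(WithLp.equiv 2 (H₀ × H₁) x.1).2, x.2.2⟩ := rfl
        have e2 : (⟨(WithLp.equiv 2 (H₀ × H₁) (c • x).1).1, (c • x).2.1⟩ : C.domain)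
            = c • ⟨(WithLp.equiv 2 (H₀ × H₁) x.1).1, x.2.1⟩ := rfl
        beta_reduce
        rw [e1, e2, C'.map_smul, C.map_smul, WithLp.equiv_symm_apply, ← WithLp.toLp_smul, Prod.smul_mk, smul_neg]
        rfl } }

open scoped InnerProductSpace

namespace Skew

variable {𝕜 E F : Type*} [RCLike 𝕜]
  [NormedAddCommGroup E] [InnerProductSpace 𝕜 E] [CompleteSpace E]
  [NormedAddCommGroup F] [InnerProductSpace 𝕜 F] [CompleteSpace F]

local notation "⟪" x ", " y "⟫" => @inner 𝕜 _ _ x y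

/-- Graph characterization of the adjoint. -/
theorem mem_adjoint_graph_iff {T : E →ₗ.[𝕜] F} (hT : Dense (T.domain : Set E)) {p : F × E} :
    p ∈ T.adjoint.graph ↔ ∀ u : T.domain, ⟪p.2, (u : E)⟫ = ⟪p.1, T u⟫ := by
  constructor
  · intro hp u
    rw [LinearPMap.mem_graph_iff] at hp
    obtain ⟨y, hy1, hy2⟩ := hp
    rw [← hy1, ← hy2]
    exact LinearPMap.adjoint_isFormalAdjoint hT y u
  · intro h
    have hy : p.1 ∈ T.adjoint.domain :=
      LinearPMap.mem_adjoint_domain_of_exists _ ⟨p.2, h⟩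
    have : T.adjoint ⟨p.1, hy⟩ = p.2 := LinearPMap.adjoint_apply_eq hT ⟨p.1, hy⟩ h
    rw [LinearPMap.mem_graph_iff]
    exact ⟨⟨p.1, hy⟩, rfl, this⟩

end Skew

namespace Skew2

variable {𝕜 E F : Type*} [RCLike 𝕜]
  [NormedAddCommGroup E] [InnerProductSpace 𝕜 E] [CompleteSpace E]
  [NormedAddCommGroup F] [InnerProductSpace 𝕜 F] [CompleteSpace F]

local notation "⟪" x ", " y "⟫" => @inner 𝕜 _ _ x y

open Skew

theorem graph_dadjoint {T : E →ₗ.[𝕜] F} (hT : Dense (T.domain : Set E))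
    (hT' : Dense (T.adjoint.domain : Set F)) :
    T.adjoint.adjoint.graph = T.graph.topologicalClosure := by
  set e : WithLp 2 (E × F) ≃L[𝕜] E × F := WithLp.prodContinuousLinearEquiv 2 𝕜 E F with he
  set K : Submodule 𝕜 (WithLp 2 (E × F)) := T.graph.comap (e.toLinearEquiv : _ →ₗ[𝕜] _) with hK
  have hmemK : ∀ w : WithLp 2 (E × F), w ∈ K ↔ (w.fst, w.snd) ∈ T.graph := by
    intro w; rfl
  -- characterization of Kᗮ
  have horth : ∀ q : WithLp 2 (E × F), q ∈ Kᗮ ↔ (q.snd, -q.fst) ∈ T.adjoint.graph := by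
    intro q
    rw [mem_adjoint_graph_iff hT, Submodule.mem_orthogonal']
    constructor
    · intro hq u
      have hw : ((u : E), T u) ∈ T.graph := T.mem_graph u
      have h0 : ⟪q, ((WithLp.equiv 2 (E × F)).symm ((u : E), T u))⟫ = 0 :=
        hq _ ((hmemK _).2 hw)
      rw [WithLp.prod_inner_apply] at h0
      have h0' : ⟪q.fst, (u : E)⟫ + ⟪q.snd, T u⟫ = 0 := h0
      show ⟪-q.fst, (u : E)⟫ = ⟪q.snd, T u⟫
      rw [inner_neg_left]
      linear_combination -h0' 
    · intro h w hw
      rw [hmemK, LinearPMap.mem_graph_iff] at hw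
      obtain ⟨u, hu1, hu2⟩ := hw
      have hu := h u
      rw [inner_neg_left] at hu
      have goal : ⟪q.fst, (u : E)⟫ + ⟪q.snd, T u⟫ = 0 := by linear_combination -hu
      rw [WithLp.prod_inner_apply, show w.ofLp.1 = (u : E) from hu1.symm, show w.ofLp.2 = T u from hu2.symm]
      exact goal
  ext p
  obtain ⟨a, b⟩ := p
  rw [mem_adjoint_graph_iff hT']
  have hclos : ((a, b) ∈ T.graph.topologicalClosure) ↔
      ((WithLp.equiv 2 (E × F)).symm (a, b)) ∈ K.topologicalClosure := by
    have hset : (K : Set (WithLp 2 (E × F))) = e.toHomeomorph ⁻¹' (T.graph : Set (E × F)) := rfl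
    show (a, b) ∈ closure (T.graph : Set (E × F)) ↔ _ ∈ closure (K : Set (WithLp 2 (E × F)))
    rw [hset, ← e.toHomeomorph.preimage_closure]
    exact Iff.rfl
  rw [hclos, ← K.orthogonal_orthogonal_eq_closure, Submodule.mem_orthogonal]
  constructor
  · intro h q hq
    rw [horth, LinearPMap.mem_graph_iff] at hq
    obtain ⟨w, hw1, hw2⟩ := hq
    simp only at hw1 hw2
    have hw := h w
    have h1 : q.fst = -(T.adjoint w) := by rw [hw2, neg_neg]
    have h2 : ⟪(w : F), b⟫ = ⟪T.adjoint w, a⟫ := by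
      have := congrArg (starRingEnd 𝕜) hw
      simpa [inner_conj_symm] using this
    have goal : ⟪q.fst, a⟫ + ⟪q.snd, b⟫ = 0 := by
      rw [← hw1, h1, inner_neg_left, h2]; ring
    rw [WithLp.prod_inner_apply]
    exact goal
  · intro h w
    set q : WithLp 2 (E × F) := (WithLp.equiv 2 (E × F)).symm (-(T.adjoint w), (w : F)) with hq
    have hqmem : q ∈ Kᗮ := by
      rw [horth]
      show ((w : F), -(-(T.adjoint w))) ∈ T.adjoint.graph
      rw [neg_neg]
      exact T.adjoint.mem_graph w
    have h0 := h q hqmem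
    rw [WithLp.prod_inner_apply] at h0
    have h0' : ⟪-(T.adjoint w), a⟫ + ⟪(w : F), b⟫ = 0 := h0
    rw [inner_neg_left] at h0'
    have h2 : ⟪(w : F), b⟫ = ⟪T.adjoint w, a⟫ := by linear_combination h0' 
    have := congrArg (starRingEnd 𝕜) h2
    simpa [inner_conj_symm] using this

end Skew2

namespace Skew3

variable {𝕜 E F : Type*} [RCLike 𝕜]
  [NormedAddCommGroup E] [InnerProductSpace 𝕜 E] [CompleteSpace E]
  [NormedAddCommGroup F] [InnerProductSpace 𝕜 F] [CompleteSpace F]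

local notation "⟪" x ", " y "⟫" => @inner 𝕜 _ _ x y

open Skew Skew2

theorem isClosable {T : E →ₗ.[𝕜] F} (hT : Dense (T.domain : Set E))
    (hT' : Dense (T.adjoint.domain : Set F)) : T.IsClosable :=
  ⟨T.adjoint.adjoint, (graph_dadjoint hT hT').symm⟩

theorem closure_eq_dadjoint {T : E →ₗ.[𝕜] F} (hT : Dense (T.domain : Set E))
    (hT' : Dense (T.adjoint.domain : Set F)) : T.closure = T.adjoint.adjoint :=
  LinearPMap.eq_of_eq_graph <| by
    rw [← (isClosable hT hT').graph_closure_eq_closure_graph, graph_dadjoint hT hT']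

theorem dense_closure_domain {T : E →ₗ.[𝕜] F} (hT : Dense (T.domain : Set E)) :
    Dense (T.closure.domain : Set E) :=
  hT.mono (T.le_closure.1 : (T.domain : Set E) ⊆ T.closure.domain)

theorem adjoint_closure {T : E →ₗ.[𝕜] F} (hT : Dense (T.domain : Set E))
    (hT' : Dense (T.adjoint.domain : Set F)) : T.closure.adjoint = T.adjoint := by
  apply LinearPMap.eq_of_eq_graph
  ext ⟨y, x⟩
  rw [mem_adjoint_graph_iff (dense_closure_domain hT), mem_adjoint_graph_iff hT]
  constructor
  · intro h u
    have hu : (u : E) ∈ T.closure.domain := T.le_closure.1 u.2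
    have heq : T u = T.closure ⟨(u : E), hu⟩ := T.le_closure.2 rfl
    have := h ⟨(u : E), hu⟩
    rw [← heq] at this
    exact this
  · intro h u
    -- the set of pairs (a, b) with ⟪x, a⟫ = ⟪y, b⟫ is closed and contains graph T
    have hmem : ((u : E), T.closure u) ∈ T.closure.graph := T.closure.mem_graph u
    rw [← (isClosable hT hT').graph_closure_eq_closure_graph] at hmem
    have hsub : (T.graph : Set (E × F)) ⊆ {p : E × F | ⟪x, p.1⟫ = ⟪y, p.2⟫} := by
      rintro ⟨a, b⟩ hab
      rw [SetLike.mem_coe, LinearPMap.mem_graph_iff] at hab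
      obtain ⟨v, hv1, hv2⟩ := hab
      simp only at hv1 hv2
      simp only [Set.mem_setOf_eq]
      rw [← hv1, ← hv2]
      exact h v
    have hclosed : IsClosed {p : E × F | ⟪x, p.1⟫ = ⟪y, p.2⟫} := by
      apply isClosed_eq
      · exact (continuous_const.inner continuous_fst)
      · exact (continuous_const.inner continuous_snd)
    have : ((u : E), T.closure u) ∈ closure (T.graph : Set (E × F)) := hmem
    exact (closure_minimal hsub hclosed) this

end Skew3


namespace Skew4

variable {𝕜 H Y X : Type*} [RCLike 𝕜]
  [NormedAddCommGroup H] [InnerProductSpace 𝕜 H] [CompleteSpace H]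
  [NormedAddCommGroup Y] [InnerProductSpace 𝕜 Y] [CompleteSpace Y]
  [NormedAddCommGroup X] [InnerProductSpace 𝕜 X] [CompleteSpace X]

local notation "⟪" x ", " y "⟫" => @inner 𝕜 _ _ x y

open Skew Skew2 Skew3

theorem adjoint_clmCompPMap (C : H →ₗ.[𝕜] Y) (hCdense : Dense (C.domain : Set H))
    (B : Y →L[𝕜] X) :
    (clmCompPMap B C).adjoint = pmapCompClm C.adjoint (ContinuousLinearMap.adjoint B) := by
  apply LinearPMap.eq_of_eq_graph
  ext ⟨y, x⟩
  have hdom : (clmCompPMap B C).domain = C.domain := rfl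
  rw [mem_adjoint_graph_iff (T := clmCompPMap B C) hCdense]
  have hR : ((y, x) ∈ (pmapCompClm C.adjoint (ContinuousLinearMap.adjoint B)).graph) ↔
      ((ContinuousLinearMap.adjoint B) y, x) ∈ C.adjoint.graph := by
    rw [LinearPMap.mem_graph_iff, LinearPMap.mem_graph_iff]
    constructor
    · rintro ⟨u, hu1, hu2⟩
      simp only at hu1 hu2
      refine ⟨⟨(ContinuousLinearMap.adjoint B) (u : X), u.2⟩, ?_, ?_⟩
      · simp [hu1]
      · rw [← hu2]; rfl
    · rintro ⟨u, hu1, hu2⟩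
      simp only at hu1 hu2
      have hy : (ContinuousLinearMap.adjoint B) y ∈ C.adjoint.domain := hu1 ▸ u.2
      refine ⟨⟨y, hy⟩, rfl, ?_⟩
      show C.adjoint ⟨(ContinuousLinearMap.adjoint B) y, hy⟩ = (y, x).2
      have hg : ((ContinuousLinearMap.adjoint B) y, x) ∈ C.adjoint.graph := by
        rw [← hu1, ← hu2]; exact C.adjoint.mem_graph u
      exact ((LinearPMap.image_iff hy).2 hg).symm
  rw [hR, mem_adjoint_graph_iff (T := C) hCdense]
  constructor
  · intro h u
    have := h u
    rw [show (clmCompPMap B C) u = B (C u) from rfl] at this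
    rwa [← ContinuousLinearMap.adjoint_inner_left] at this
  · intro h u
    have := h u
    rw [ContinuousLinearMap.adjoint_inner_left] at this
    exact this

end Skew4


namespace Skew5

variable {𝕜 E F : Type*} [RCLike 𝕜]
  [NormedAddCommGroup E] [InnerProductSpace 𝕜 E] [CompleteSpace E]
  [NormedAddCommGroup F] [InnerProductSpace 𝕜 F] [CompleteSpace F]

local notation "⟪" x ", " y "⟫" => @inner 𝕜 _ _ x y

open Skew Skew2 Skew3

theorem blk_adjoint (S : E →ₗ.[𝕜] F) (T : F →ₗ.[𝕜] E)
    (hS : Dense (S.domain : Set E)) (hT : Dense (T.domain : Set F))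
    (hST : S.adjoint = T) (hTS : T.adjoint = S) :
    (blkL2 S T).adjoint = -(blkL2 S T) := by
  set e : WithLp 2 (E × F) ≃L[𝕜] E × F := WithLp.prodContinuousLinearEquiv 2 𝕜 E F with he
  have hA : Dense (((blkL2 S T).domain : Set (WithLp 2 (E × F)))) := by
    have h1 : Dense ((S.domain : Set E) ×ˢ (T.domain : Set F)) := hS.prod hT
    rw [dense_iff_closure_eq] at h1 ⊢
    have h2 : ((blkL2 S T).domain : Set (WithLp 2 (E × F)))
        = e.toHomeomorph ⁻¹' ((S.domain : Set E) ×ˢ (T.domain : Set F)) := rfl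
    rw [h2, ← e.toHomeomorph.preimage_closure, h1, Set.preimage_univ]
  -- formal adjoint identities
  have hfa1 : ∀ (a : T.domain) (b : S.domain), ⟪T a, (b : E)⟫ = ⟪(a : F), S b⟫ := by
    rw [← hST]; exact LinearPMap.adjoint_isFormalAdjoint hS
  have hfa2 : ∀ (a : S.domain) (b : T.domain), ⟪S a, (b : F)⟫ = ⟪(a : E), T b⟫ := by
    rw [← hTS]; exact LinearPMap.adjoint_isFormalAdjoint hT
  apply LinearPMap.eq_of_eq_graph
  ext ⟨q, r⟩
  rw [mem_adjoint_graph_iff hA]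
  constructor
  · intro h
    -- test against (u, 0)
    have key1 : ∀ u : S.domain, ⟪r.fst, (u : E)⟫ = ⟪q.snd, S u⟫ := by
      intro u
      have hmem : ((WithLp.equiv 2 (E × F)).symm ((u : E), (0 : F))) ∈ (blkL2 S T).domain :=
        Submodule.mem_prod.2 ⟨u.2, T.domain.zero_mem⟩
      have hw := h ⟨_, hmem⟩
      have hT0 : T ⟨(0 : F), T.domain.zero_mem⟩ = 0 := T.map_zero
      have hSu : S ⟨(u : E), u.2⟩ = S u := rfl
      have happ : blkL2 S T ⟨_, hmem⟩
          = (WithLp.equiv 2 (E × F)).symm ((0 : E), S u) := by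
        show (WithLp.equiv 2 (E × F)).symm
            (-(T ⟨(0 : F), T.domain.zero_mem⟩), S ⟨(u : E), u.2⟩) = _
        rw [hT0, hSu, neg_zero]
      rw [happ] at hw
      rw [WithLp.prod_inner_apply, WithLp.prod_inner_apply] at hw
      have hw' : ⟪r.fst, (u : E)⟫ + ⟪r.snd, (0 : F)⟫
          = ⟪q.fst, (0 : E)⟫ + ⟪q.snd, S u⟫ := hw
      simpa using hw'
    have key2 : ∀ x : T.domain, ⟪-r.snd, (x : F)⟫ = ⟪q.fst, T x⟫ := by
      intro x
      have hmem : ((WithLp.equiv 2 (E × F)).symm ((0 : E), (x : F))) ∈ (blkL2 S T).domain :=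
        Submodule.mem_prod.2 ⟨S.domain.zero_mem, x.2⟩
      have hw := h ⟨_, hmem⟩
      have hS0 : S ⟨(0 : E), S.domain.zero_mem⟩ = 0 := S.map_zero
      have hTx : T ⟨(x : F), x.2⟩ = T x := rfl
      have happ : blkL2 S T ⟨_, hmem⟩
          = (WithLp.equiv 2 (E × F)).symm (-(T x), (0 : F)) := by
        show (WithLp.equiv 2 (E × F)).symm
            (-(T ⟨(x : F), x.2⟩), S ⟨(0 : E), S.domain.zero_mem⟩) = _
        rw [hTx, hS0]
      rw [happ] at hw
      rw [WithLp.prod_inner_apply, WithLp.prod_inner_apply] at hw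
      have hw' : ⟪r.fst, (0 : E)⟫ + ⟪r.snd, (x : F)⟫
          = ⟪q.fst, -(T x)⟫ + ⟪q.snd, (0 : F)⟫ := hw
      rw [inner_zero_right, inner_zero_right, inner_neg_right] at hw'
      rw [inner_neg_left]
      linear_combination -hw'
    -- conclude memberships
    have hg1 : (q.snd, r.fst) ∈ T.graph := by
      rw [← hST, mem_adjoint_graph_iff hS]
      exact key1
    have hg2 : (q.fst, -r.snd) ∈ S.graph := by
      rw [← hTS, mem_adjoint_graph_iff hT]
      exact key2
    have hq2 : q.snd ∈ T.domain := LinearPMap.mem_domain_of_mem_graph hg1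
    have hq1 : q.fst ∈ S.domain := LinearPMap.mem_domain_of_mem_graph hg2
    have hqmem : q ∈ (blkL2 S T).domain := Submodule.mem_prod.2 ⟨hq1, hq2⟩
    have hT1 : T ⟨q.snd, hq2⟩ = r.fst := ((LinearPMap.image_iff hq2).2 hg1).symm
    have hS1 : S ⟨q.fst, hq1⟩ = -r.snd := ((LinearPMap.image_iff hq1).2 hg2).symm
    rw [LinearPMap.mem_graph_iff]
    refine ⟨⟨q, hqmem⟩, rfl, ?_⟩
    show -(blkL2 S T ⟨q, hqmem⟩) = (q, r).2
    have happ : blkL2 S T ⟨q, hqmem⟩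
        = (WithLp.equiv 2 (E × F)).symm (-r.fst, -r.snd) := by
      show (WithLp.equiv 2 (E × F)).symm
          (-(T ⟨q.snd, hq2⟩), S ⟨q.fst, hq1⟩) = _
      rw [hT1, hS1]
    rw [happ]
    apply (WithLp.equiv 2 (E × F)).injective
    show (-(-r.fst), -(-r.snd)) = (r.fst, r.snd)
    rw [neg_neg, neg_neg]
  · intro hg
    rw [LinearPMap.mem_graph_iff] at hg
    obtain ⟨y, hy1, hy2⟩ := hg
    simp only at hy1 hy2
    subst hy1
    intro w
    -- memberships of y and w
    have hy2' : r = -(blkL2 S T ⟨(y : WithLp 2 (E × F)), y.2⟩) := by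
      rw [← hy2]; rfl
    have hyq : ((y : WithLp 2 (E × F)) : WithLp 2 (E × F)) ∈ (blkL2 S T).domain := y.2
    have hq1 : (y : WithLp 2 (E × F)).fst ∈ S.domain := hyq.1
    have hq2 : (y : WithLp 2 (E × F)).snd ∈ T.domain := hyq.2
    have hw1 : (w : WithLp 2 (E × F)).fst ∈ S.domain := w.2.1
    have hw2 : (w : WithLp 2 (E × F)).snd ∈ T.domain := w.2.2
    set a : S.domain := ⟨(y : WithLp 2 (E × F)).fst, hq1⟩
    set b : T.domain := ⟨(y : WithLp 2 (E × F)).snd, hq2⟩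
    set c : S.domain := ⟨(w : WithLp 2 (E × F)).fst, hw1⟩
    set d : T.domain := ⟨(w : WithLp 2 (E × F)).snd, hw2⟩
    have hr : r = (WithLp.equiv 2 (E × F)).symm (T b, -(S a)) := by
      rw [hy2']
      apply (WithLp.equiv 2 (E × F)).injective
      show (-(-(T b)), -(S a)) = (T b, -(S a))
      rw [neg_neg]
    have hAw : blkL2 S T w = (WithLp.equiv 2 (E × F)).symm (-(T d), S c) := rfl
    rw [hr, hAw, WithLp.prod_inner_apply, WithLp.prod_inner_apply]
    have goal' : ⟪T b, (c : E)⟫ + ⟪-(S a), (d : F)⟫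
        = ⟪(a : E), -(T d)⟫ + ⟪(b : F), S c⟫ := by
      rw [inner_neg_left, inner_neg_right]
      rw [hfa1 b c, hfa2 a d]
      ring
    exact goal'

end Skew5

/-- Let `C : D(C) ⊆ H → Y` be closed and densely defined, `B : Y → X`
bounded, and suppose `C* B*` is densely defined. Then the block operator
`[[0, -C*B*],[cl(BC), 0]]` on `H ⊕ X` with domain `D(cl(BC)) ⊕ D(C*B*)` is
skew-selfadjoint. -/
theorem descendant_blk_skew_selfAdjoint {𝕜 H Y X : Type*} [RCLike 𝕜]
    [NormedAddCommGroup H] [InnerProductSpace 𝕜 H] [CompleteSpace H]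
    [NormedAddCommGroup Y] [InnerProductSpace 𝕜 Y] [CompleteSpace Y]
    [NormedAddCommGroup X] [InnerProductSpace 𝕜 X] [CompleteSpace X]
    (C : H →ₗ.[𝕜] Y) (hCclosed : C.IsClosed) (hCdense : Dense (C.domain : Set H))
    (B : Y →L[𝕜] X)
    (hdense : Dense ((pmapCompClm C.adjoint (ContinuousLinearMap.adjoint B)).domain : Set X)) :
    (blkL2 (clmCompPMap B C).closure
        (pmapCompClm C.adjoint (ContinuousLinearMap.adjoint B))).adjoint
      = -(blkL2 (clmCompPMap B C).closure
            (pmapCompClm C.adjoint (ContinuousLinearMap.adjoint B))) := by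
  have hT0dense : Dense ((clmCompPMap B C).domain : Set H) := hCdense
  have hadj : (clmCompPMap B C).adjoint
      = pmapCompClm C.adjoint (ContinuousLinearMap.adjoint B) :=
    Skew4.adjoint_clmCompPMap C hCdense B
  have hT'dense : Dense ((clmCompPMap B C).adjoint.domain : Set X) := by
    rw [hadj]; exact hdense
  have hSdense := Skew3.dense_closure_domain hT0dense
  have hS_adj : (clmCompPMap B C).closure.adjoint
      = pmapCompClm C.adjoint (ContinuousLinearMap.adjoint B) := by
    rw [Skew3.adjoint_closure hT0dense hT'dense, hadj]
  have hT_adj : (pmapCompClm C.adjoint (ContinuousLinearMap.adjoint B)).adjoint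
      = (clmCompPMap B C).closure := by
    rw [← hadj, ← Skew3.closure_eq_dadjoint hT0dense hT'dense]
  exact Skew5.blk_adjoint _ _ hSdense hdense hS_adj hT_adj
end

section
/- Let A be a skew-selfadjoint operator on a Hilbert space H and let W : H → H be a bounded, boundedly invertible, selfadjoint operator. If W A W (with domain {x : Wx ∈ D(A)}) is densely defined, then its closure is skew-selfadjoint. In particular, for M₀ selfadjoint, bounded, and strictly positive definite, √(M₀⁻¹) A √(M₀⁻¹) is skew-selfadjoint (after closure). -/
section Aux

variable {𝕜 E F : Type*} [RCLike 𝕜]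
  [NormedAddCommGroup E] [InnerProductSpace 𝕜 E]
  [NormedAddCommGroup F] [InnerProductSpace 𝕜 F]

local notation "⟪" x ", " y "⟫" => @inner 𝕜 _ _ x y

theorem pmap_apply_congr {f g : E →ₗ.[𝕜] F} (h : f = g) (x : f.domain)
    (hx : (x : E) ∈ g.domain) : f x = g ⟨x, hx⟩ := by
  subst h; rfl

/-- The adjoint of a densely defined operator is closed. -/
theorem adjoint_isClosed_aux [CompleteSpace E] {T : E →ₗ.[𝕜] F}
    (hT : Dense (T.domain : Set E)) : T.adjoint.IsClosed := by
  have hgraph : (T.adjoint.graph : Set (F × E)) =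
      ⋂ x : T.domain, {p : F × E | ⟪p.2, (x : E)⟫ = ⟪p.1, T x⟫} := by
    ext p
    simp only [Set.mem_iInter, Set.mem_setOf_eq, SetLike.mem_coe]
    constructor
    · intro hp x
      rcases T.adjoint.mem_graph_iff.mp hp with ⟨y, hy1, hy2⟩
      rw [← hy1, ← hy2]
      exact LinearPMap.adjoint_isFormalAdjoint hT y x
    · intro hp
      have hy : p.1 ∈ T.adjoint.domain :=
        LinearPMap.mem_adjoint_domain_of_exists _ ⟨p.2, fun x => hp x⟩
      have hval : T.adjoint ⟨p.1, hy⟩ = p.2 :=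
        LinearPMap.adjoint_apply_eq hT _ (fun x => hp x)
      have := T.adjoint.mem_graph ⟨p.1, hy⟩
      rwa [hval] at this
  show _root_.IsClosed (T.adjoint.graph : Set (F × E))
  rw [hgraph]
  refine isClosed_iInter fun x => isClosed_eq ?_ ?_
  · exact Continuous.inner continuous_snd continuous_const
  · exact Continuous.inner continuous_fst continuous_const

/-- The negation of a closed operator is closed. -/
theorem neg_isClosed_aux {f : E →ₗ.[𝕜] F} (hf : f.IsClosed) : (-f).IsClosed := by
  have hgraph : ((-f).graph : Set (E × F)) =
      (fun p : E × F => (p.1, -p.2)) ⁻¹' (f.graph : Set (E × F)) := by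
    ext p
    simp only [Set.mem_preimage, SetLike.mem_coe, LinearPMap.mem_graph_iff]
    constructor
    · rintro ⟨y, hy1, hy2⟩
      exact ⟨⟨y.1, y.2⟩, hy1, by rw [show f ⟨y.1, y.2⟩ = f.toFun y from rfl,
        show (-f) y = -(f.toFun y) from rfl] at *; rw [← hy2, neg_neg]⟩
    · rintro ⟨y, hy1, hy2⟩
      exact ⟨⟨y.1, y.2⟩, hy1, by rw [show (-f) ⟨y.1, y.2⟩ = -(f.toFun y) from rfl,
        show f y = f.toFun y from rfl] at *; rw [hy2, neg_neg]⟩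
  show _root_.IsClosed ((-f).graph : Set (E × F))
  rw [hgraph]
  exact hf.preimage (continuous_fst.prodMk continuous_snd.neg)

/-- Skew-symmetry of the sesquilinear form of an operator with `A† = -A`. -/
theorem skew_inner_aux [CompleteSpace E] {A : E →ₗ.[𝕜] E} (hA : A.adjoint = -A)
    (u v : A.domain) : ⟪A u, (v : E)⟫ = -⟪(u : E), A v⟫ := by
  by_cases hd : Dense (A.domain : Set E)
  · have hv' : (v : E) ∈ A.adjoint.domain := by rw [hA]; exact v.2
    have h1 := LinearPMap.adjoint_isFormalAdjoint hd ⟨(v : E), hv'⟩ u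
    have h2 : A.adjoint ⟨(v : E), hv'⟩ = -(A v) := by
      rw [pmap_apply_congr hA ⟨(v : E), hv'⟩ v.2, LinearPMap.neg_apply]; rfl
    rw [h2, inner_neg_left] at h1
    calc ⟪A u, (v : E)⟫ = starRingEnd 𝕜 ⟪(v : E), A u⟫ := (inner_conj_symm _ _).symm
      _ = starRingEnd 𝕜 (-⟪A v, (u : E)⟫) := by rw [← h1]
      _ = -⟪(u : E), A v⟫ := by rw [map_neg, inner_conj_symm]
  · have hz : ∀ p : A.domain, A p = 0 := by
      intro p
      have hp' : (p : E) ∈ A.adjoint.domain := by rw [hA]; exact p.2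
      have h0 := LinearPMap.adjoint_apply_of_not_dense hd ⟨(p : E), hp'⟩
      rw [pmap_apply_congr hA ⟨(p : E), hp'⟩ p.2, LinearPMap.neg_apply,
        neg_eq_zero] at h0
      exact h0
    rw [hz u, hz v, inner_zero_left, inner_zero_right, neg_zero]

end Aux

/-- Let `A` be skew-selfadjoint on a Hilbert space `H` and let `W` be a
bounded, boundedly invertible, selfadjoint operator on `H`. If `W A W` (with domain
`{x | W x ∈ D(A)}`) is densely defined, then its closure is skew-selfadjoint. -/
theorem WAW_closure_skew_selfAdjoint {𝕜 H : Type*} [RCLike 𝕜]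
    [NormedAddCommGroup H] [InnerProductSpace 𝕜 H] [CompleteSpace H]
    (A : H →ₗ.[𝕜] H) (hA : A.adjoint = -A)
    (W V : H →L[𝕜] H) (hW : IsSelfAdjoint W)
    (hWV : W.comp V = ContinuousLinearMap.id 𝕜 H)
    (hVW : V.comp W = ContinuousLinearMap.id 𝕜 H)
    (hdense : Dense ((clmCompPMap W (pmapCompClm A W)).domain : Set H)) :
    (clmCompPMap W (pmapCompClm A W)).IsClosable ∧
      (clmCompPMap W (pmapCompClm A W)).closure.adjoint
        = -(clmCompPMap W (pmapCompClm A W)).closure := by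
  set T := clmCompPMap W (pmapCompClm A W) with hTdef
  have hTapp : ∀ x : T.domain, T x = W (A ⟨W x, x.2⟩) := fun x => rfl
  have hWVapp : ∀ a : H, W (V a) = a := fun a => congrArg (fun f => f a) hWV
  have hW' : ContinuousLinearMap.adjoint W = W :=
    ContinuousLinearMap.isSelfAdjoint_iff'.mp hW
  have hWinner : ∀ a b : H, inner 𝕜 (W a) b = inner 𝕜 a (W b) := by
    intro a b
    conv_lhs => rw [← hW']
    exact ContinuousLinearMap.adjoint_inner_left W b a
  have hVinner : ∀ a b : H, inner 𝕜 (V a) b = inner 𝕜 a (V b) := by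
    intro a b
    conv_lhs => rw [← hWVapp b]
    rw [← hWinner, hWVapp]
  -- skew-symmetry of T
  have hskew : ∀ x y : T.domain, inner 𝕜 (T x) (y : H) = -inner 𝕜 (x : H) (T y) := by
    intro x y
    rw [hTapp x, hTapp y, hWinner,
      skew_inner_aux hA ⟨W x, x.2⟩ ⟨W y, y.2⟩, hWinner]
  have hfa : T.IsFormalAdjoint (-T) := by
    intro x y
    rw [LinearPMap.neg_apply, inner_neg_right]
    exact hskew x ⟨(y : H), y.2⟩
  have hle1 : -T ≤ T.adjoint := hfa.le_adjoint hdense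
  have hle2 : T.adjoint ≤ -T := by
    constructor
    · intro y hy
      set z := T.adjoint ⟨y, hy⟩ with hz
      have key : ∀ u : A.domain, inner 𝕜 (V z) (u : H) = inner 𝕜 (W y) (A u) := by
        intro u
        have hx : W (V (u : H)) ∈ A.domain := by rw [hWVapp]; exact u.2
        have hxT : V (u : H) ∈ T.domain := hx
        have h1 := LinearPMap.adjoint_isFormalAdjoint hdense ⟨y, hy⟩ ⟨V (u : H), hxT⟩
        have h2 : (⟨W (V (u : H)), hx⟩ : A.domain) = u := Subtype.ext (hWVapp (u : H))
        rw [hVinner]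
        rw [show ((⟨V (u : H), hxT⟩ : T.domain) : H) = V (u : H) from rfl] at h1
        rw [h1, hTapp ⟨V (u : H), hxT⟩, hWinner]
        congr 1
        rw [show (⟨W ((⟨V (u : H), hxT⟩ : T.domain) : H), _⟩ : A.domain)
          = (⟨W (V (u : H)), hx⟩ : A.domain) from rfl, h2]
      have hmem : W y ∈ A.adjoint.domain :=
        LinearPMap.mem_adjoint_domain_of_exists _ ⟨V z, fun u => key u⟩
      rw [hA] at hmem
      exact hmem
    · intro x y hxy
      apply hdense.eq_of_inner_left (𝕜 := 𝕜)
      intro w hw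
      obtain ⟨v, rfl⟩ : ∃ v : T.domain, (v : H) = w := ⟨⟨w, hw⟩, rfl⟩
      have h1 := LinearPMap.adjoint_isFormalAdjoint hdense x v
      have h2 := hskew v ⟨(y : H), y.2⟩
      have h3 : inner 𝕜 ((y : H)) (T v) = inner 𝕜 ((-T) y) (v : H) := by
        rw [← inner_conj_symm, h2, map_neg, inner_conj_symm, LinearPMap.neg_apply,
          inner_neg_left]
        rfl
      rw [h1, hxy, h3]
  have hadj : T.adjoint = -T := le_antisymm hle2 hle1
  have hclosed : T.IsClosed := by
    have h := neg_isClosed_aux (adjoint_isClosed_aux hdense)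
    rwa [hadj, neg_neg] at h
  have hclosable : T.IsClosable := hclosed.isClosable
  have hceq : T.closure = T := by
    apply LinearPMap.eq_of_eq_graph
    rw [← hclosable.graph_closure_eq_closure_graph]
    exact IsClosed.submodule_topologicalClosure_eq hclosed
  exact ⟨hclosable, by rw [hceq, hadj]⟩
end

section
/- Let A be skew-selfadjoint on a Hilbert space H and let M₁ : H → H be bounded with sym(M₁) := (M₁ + M₁*)/2 ≥ c > 0. Then M₁ + A : D(A) → H is bijective with ‖(M₁ + A)⁻¹‖ ≤ 1/c, i.e. the static Friedrichs problem (M₁ + A)u = f is well-posed. -/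
open scoped RealInnerProductSpace

/-- Let `A` be skew-selfadjoint on a Hilbert space `H` and `M₁` bounded
with `sym M₁ ≥ c > 0` (i.e. `⟪x, M₁ x⟫ ≥ c ‖x‖²`). Then `M₁ + A : D(A) → H` is bijective
with `‖(M₁ + A)⁻¹‖ ≤ 1/c`: the static Friedrichs problem `(M₁ + A) u = f` is
well-posed. -/
theorem static_friedrichs_well_posed {H : Type*}
    [NormedAddCommGroup H] [InnerProductSpace ℝ H] [CompleteSpace H]
    (A : H →ₗ.[ℝ] H) (hA : A.adjoint = -A)
    (M₁ : H →L[ℝ] H) (c : ℝ) (hc : 0 < c)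
    (hM₁ : ∀ x : H, c * ‖x‖ ^ 2 ≤ ⟪x, M₁ x⟫) :
    (∀ f : H, ∃! u : A.domain, M₁ (u : H) + A u = f) ∧
    (∀ u : A.domain, ‖(u : H)‖ ≤ (1 / c) * ‖M₁ (u : H) + A u‖) := by
  have hdom : A.adjoint.domain = A.domain := by rw [hA]; rfl
  -- congruence for applying hA
  have happ : ∀ (x : A.adjoint.domain) (y : A.domain), (x : H) = (y : H) →
      A.adjoint x = -(A y) := by
    intro x y hxy
    obtain ⟨x, hx⟩ := x; obtain ⟨y, hy⟩ := y; simp only at hxy; subst hxy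
    have := (LinearPMap.ext_iff.mp hA).2 (x := x) (hf := hx) (hg := hy)
    rwa [LinearPMap.neg_apply] at this
  -- density of the domain
  have hDense : Dense (A.domain : Set H) := by
    by_contra h
    have hzero : ∀ u : A.domain, A u = 0 := by
      intro u
      have hm : (u : H) ∈ A.adjoint.domain := hdom.symm ▸ u.2
      have h1 : A.adjoint ⟨(u : H), hm⟩ = -(A u) := happ _ u rfl
      have h2 : A.adjoint ⟨(u : H), hm⟩ = 0 := LinearPMap.adjoint_apply_of_not_dense h _
      rw [h2] at h1
      exact (neg_eq_zero.mp h1.symm)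
    have htop : A.domain = ⊤ := by
      rw [← hdom, Submodule.eq_top_iff']
      intro x
      exact LinearPMap.mem_adjoint_domain_of_exists x
        ⟨0, fun v => by rw [hzero v, inner_zero_left, inner_zero_right]⟩
    exact h (htop ▸ dense_univ)
  have hform := LinearPMap.adjoint_isFormalAdjoint hDense (T := A)
  -- skewness
  have hskew : ∀ u : A.domain, ⟪(u : H), A u⟫ = 0 := by
    intro u
    have hm : (u : H) ∈ A.adjoint.domain := hdom.symm ▸ u.2
    have h1 := hform ⟨(u : H), hm⟩ u
    rw [happ _ u rfl] at h1
    have h2 : ⟪A u, (u : H)⟫ = ⟪(u : H), A u⟫ := real_inner_comm _ _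
    rw [inner_neg_left] at h1
    simp only [Submodule.coe_mk] at h1
    linarith
  -- coercivity estimate
  have bound : ∀ u : A.domain, ‖(u : H)‖ ≤ (1 / c) * ‖M₁ (u : H) + A u‖ := by
    intro u
    have h1 : c * ‖(u : H)‖ ^ 2 ≤ ⟪(u : H), M₁ (u : H) + A u⟫ := by
      rw [inner_add_right, hskew u, add_zero]
      exact hM₁ _
    have h2 : ⟪(u : H), M₁ (u : H) + A u⟫ ≤ ‖(u : H)‖ * ‖M₁ (u : H) + A u‖ :=
      real_inner_le_norm _ _
    have h3 : 0 ≤ ‖M₁ (u : H) + A u‖ := norm_nonneg _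
    have h4 : 0 ≤ ‖(u : H)‖ := norm_nonneg _
    rcases eq_or_lt_of_le h4 with h5 | h5
    · rw [← h5]; positivity
    · calc ‖(u : H)‖ ≤ ‖M₁ (u : H) + A u‖ / c := by
            rw [le_div_iff₀ hc]; nlinarith
        _ = (1 / c) * ‖M₁ (u : H) + A u‖ := by ring
  refine ⟨?_, bound⟩
  -- the range as a submodule
  set T' : A.domain →ₗ[ℝ] H :=
    ((M₁ : H →ₗ[ℝ] H).comp A.domain.subtype) + A.toFun with hT'
  have hT'app : ∀ u : A.domain, T' u = M₁ (u : H) + A u := fun u => rfl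
  set K : Submodule ℝ H := LinearMap.range T' with hK
  -- K is closed
  have hclosed : IsClosed (K : Set H) := by
    apply IsSeqClosed.isClosed
    intro fn f hfn hf
    choose un hun using hfn
    have hfc : CauchySeq fn := hf.cauchySeq
    have huc : CauchySeq (fun n => (un n : H)) := by
      rw [Metric.cauchySeq_iff] at hfc ⊢
      intro ε hε
      obtain ⟨N, hN⟩ := hfc (c * ε) (by positivity)
      refine ⟨N, fun m hm n hn => ?_⟩
      have h1 := bound (un m - un n)
      have h2 : M₁ ((un m - un n : A.domain) : H) + A (un m - un n) = fn m - fn n := by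
        rw [← hT'app, map_sub, hun, hun]
      rw [h2] at h1
      have h3 : dist (fn m) (fn n) < c * ε := hN m hm n hn
      rw [dist_eq_norm] at h3 ⊢
      push_cast at h1
      calc ‖(un m : H) - (un n : H)‖ ≤ (1 / c) * ‖fn m - fn n‖ := h1
        _ < (1 / c) * (c * ε) := by
            apply mul_lt_mul_of_pos_left h3 (by positivity)
        _ = ε := by field_simp
    obtain ⟨u, hu⟩ := cauchySeq_tendsto_of_complete huc
    have hM₁u : Filter.Tendsto (fun n => M₁ (un n : H)) Filter.atTop (nhds (M₁ u)) :=
      (M₁.continuous.tendsto u).comp hu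
    have hAu : Filter.Tendsto (fun n => A (un n)) Filter.atTop (nhds (f - M₁ u)) := by
      have : ∀ n, A (un n) = fn n - M₁ (un n : H) := by
        intro n; rw [← hun n, hT'app]; abel
      simp only [this]
      exact hf.sub hM₁u
    set w : H := f - M₁ u with hw
    have hinner : ∀ x : A.domain, ⟪-w, (x : H)⟫ = ⟪u, A x⟫ := by
      intro x
      have h1 : Filter.Tendsto (fun n => ⟪(un n : H), A x⟫) Filter.atTop (nhds ⟪u, A x⟫) :=
        hu.inner tendsto_const_nhds
      have h2 : ∀ n, ⟪(un n : H), A x⟫ = ⟪-(A (un n)), (x : H)⟫ := by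
        intro n
        have hm : ((un n : H)) ∈ A.adjoint.domain := hdom.symm ▸ (un n).2
        have := hform ⟨(un n : H), hm⟩ x
        rw [happ _ (un n) rfl] at this
        exact this.symm
      have h3 : Filter.Tendsto (fun n => ⟪-(A (un n)), (x : H)⟫) Filter.atTop
          (nhds ⟪-w, (x : H)⟫) := (hAu.neg).inner tendsto_const_nhds
      simp only [h2] at h1
      exact tendsto_nhds_unique h3 h1
    have humem : u ∈ A.adjoint.domain :=
      LinearPMap.mem_adjoint_domain_of_exists u ⟨-w, hinner⟩
    have hadj : A.adjoint ⟨u, humem⟩ = -w :=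
      LinearPMap.adjoint_apply_eq hDense _ hinner
    have humem' : u ∈ A.domain := hdom ▸ humem
    have hAval : A ⟨u, humem'⟩ = w := by
      have := happ ⟨u, humem⟩ ⟨u, humem'⟩ rfl
      rw [hadj] at this
      exact (neg_injective this.symm)
    exact ⟨⟨u, humem'⟩, by rw [hT'app, hAval, hw]; abel⟩
  -- K is dense (orthogonal complement is trivial)
  have horth : Kᗮ = ⊥ := by
    rw [Submodule.eq_bot_iff]
    intro f hf
    rw [Submodule.mem_orthogonal] at hf
    have hf' : ∀ x : A.domain, ⟪f, M₁ (x : H) + A x⟫ = 0 := by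
      intro x
      rw [real_inner_comm]
      exact hf _ ⟨x, rfl⟩
    have hinner : ∀ x : A.domain, ⟪-(M₁.adjoint f), (x : H)⟫ = ⟪f, A x⟫ := by
      intro x
      have h1 := hf' x
      rw [inner_add_right] at h1
      have h2 : ⟪f, M₁ (x : H)⟫ = ⟪M₁.adjoint f, (x : H)⟫ :=
        (ContinuousLinearMap.adjoint_inner_left M₁ (x : H) f).symm
      rw [inner_neg_left]
      linarith
    have hfmem : f ∈ A.adjoint.domain :=
      LinearPMap.mem_adjoint_domain_of_exists f ⟨-(M₁.adjoint f), hinner⟩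
    have hadj : A.adjoint ⟨f, hfmem⟩ = -(M₁.adjoint f) :=
      LinearPMap.adjoint_apply_eq hDense _ hinner
    have hfmem' : f ∈ A.domain := hdom ▸ hfmem
    have hAval : A ⟨f, hfmem'⟩ = M₁.adjoint f := by
      have := happ ⟨f, hfmem⟩ ⟨f, hfmem'⟩ rfl
      rw [hadj] at this
      exact (neg_injective this.symm)
    have h0 : ⟪f, M₁.adjoint f⟫ = 0 := by
      rw [← hAval]
      exact hskew ⟨f, hfmem'⟩
    have h1 : ⟪f, M₁ f⟫ = 0 := by
      rw [real_inner_comm, ← ContinuousLinearMap.adjoint_inner_right]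
      exact h0
    have h2 := hM₁ f
    rw [h1] at h2
    have h3 : ‖f‖ ^ 2 = 0 := le_antisymm (by nlinarith [sq_nonneg ‖f‖]) (sq_nonneg _)
    exact norm_eq_zero.mp (pow_eq_zero_iff two_ne_zero |>.mp h3)
  have hKtop : K = ⊤ := by
    have h1 : K.topologicalClosure = ⊤ := Submodule.topologicalClosure_eq_top_iff.mpr horth
    have h2 : K.topologicalClosure = K := by
      apply le_antisymm _ K.le_topologicalClosure
      intro x hx
      have : x ∈ closure (K : Set H) := hx
      rwa [hclosed.closure_eq] at this
    rw [← h2, h1]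
  -- existence and uniqueness
  intro f
  have hfK : f ∈ K := hKtop ▸ Submodule.mem_top
  obtain ⟨u, hu⟩ := hfK
  have hu' : M₁ (u : H) + A u = f := by rw [← hT'app]; exact hu
  refine ⟨u, hu', ?_⟩
  intro v hv
  have hvf : T' v = f := by rw [hT'app]; exact hv
  have hdiff : M₁ ((v - u : A.domain) : H) + A (v - u) = 0 := by
    rw [← hT'app, map_sub, hvf, hu, sub_self]
  have := bound (v - u)
  rw [hdiff, norm_zero, mul_zero] at this
  have hz : ((v - u : A.domain) : H) = 0 := norm_le_zero_iff.mp this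
  have : v - u = 0 := Subtype.ext (by push_cast at hz ⊢; exact hz)
  exact sub_eq_zero.mp this
end
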